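/- Let G be a graph with maximum degree at most k, n ≥ 2, and let I_1, ..., I_{⌈(k+1)/n⌉+1} be independent sets of size n in G. Then there exists a rainbow independent 2-set: two non-adjacent vertices belonging to two distinct I_j's. Moreover this is tight: there is a max-degree-k graph with ⌈(k+1)/n⌉ independent n-sets having no rainbow independent 2-set. -/

import Mathlib

open SimpleGraph Finset

/-- `S` is an independent set in `G`. -/
def IndepIn {V : Type*} (G : SimpleGraph V) (S : Finset V) : Prop :=
  ∀ u ∈ S, ∀ v ∈ S, ¬ G.Adj u v

/-- The family `I` admits a rainbow independent `m`-set in `G`: `m` distinct pairwise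
non-adjacent vertices, each chosen from a distinct member of the family. -/
def HasRainbowIndep {V ι : Type*} (G : SimpleGraph V) (I : ι → Finset V) (m : ℕ) : Prop :=
  ∃ (j : Fin m → ι) (v : Fin m → V), Function.Injective j ∧ Function.Injective v ∧
    (∀ i, v i ∈ I (j i)) ∧ ∀ i i' : Fin m, i ≠ i' → ¬ G.Adj (v i) (v i')

/-- `G` contains no induced copy of `H`. -/
def IndFree {V W : Type*} (G : SimpleGraph V) (H : SimpleGraph W) : Prop :=
  ¬ ∃ f : W ↪ V, ∀ a b : W, G.Adj (f a) (f b) ↔ H.Adj a b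

def rowGraph (m n : ℕ) : SimpleGraph (Fin m × Fin n) where
  Adj p q := p.1 ≠ q.1
  symm := ⟨fun _ _ h => h.symm⟩
  loopless := ⟨fun _ h => h rfl⟩

instance rowGraph_dec (m n : ℕ) : DecidableRel (rowGraph m n).Adj :=
  fun p q => inferInstanceAs (Decidable (p.1 ≠ q.1))

lemma pair_rainbow {V ι : Type*} (G : SimpleGraph V) (I : ι → Finset V)
    {i i' : ι} {u v : V} (hii : i ≠ i') (hu : u ∈ I i) (hv : v ∈ I i')
    (huv : u ≠ v) (hadj : ¬ G.Adj u v) : HasRainbowIndep G I 2 := by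
  refine ⟨![i, i'], ![u, v], ?_, ?_, ?_, ?_⟩
  · intro a b h
    fin_cases a <;> fin_cases b <;> simp_all
  · intro a b h
    fin_cases a <;> fin_cases b <;> simp_all
  · intro a; fin_cases a <;> simpa
  · intro a b hab
    fin_cases a <;> fin_cases b <;> simp_all [G.adj_comm]

theorem maxDegree_rainbow_pair (k n : ℕ) (hn : 2 ≤ n) :
    (∀ (V : Type) [Fintype V] (G : SimpleGraph V) (_ : DecidableRel G.Adj),
      (∀ v : V, G.degree v ≤ k) →
      ∀ I : Fin ((k + n) / n + 1) → Finset V,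
        (∀ i, (I i).card = n ∧ IndepIn G (I i)) → HasRainbowIndep G I 2) ∧
    (∃ (V : Type) (_ : Fintype V) (G : SimpleGraph V) (_ : DecidableRel G.Adj),
      (∀ v : V, G.degree v ≤ k) ∧
      ∃ I : Fin ((k + n) / n) → Finset V,
        (∀ i, (I i).card = n ∧ IndepIn G (I i)) ∧ ¬ HasRainbowIndep G I 2) := by
  have hn0 : 0 < n := by omega
  constructor
  · intro V _ G _ hdeg I hI
    classical
    by_contra hc
    have key : ∀ i j : Fin ((k+n)/n+1), i ≠ j → ∀ u ∈ I i, ∀ v ∈ I j, u ≠ v → G.Adj u v := by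
      intro i j hij u hu v hv huv
      by_contra hadj
      exact hc (pair_rainbow G I hij hu hv huv hadj)
    have hdisj : ∀ i j : Fin ((k+n)/n+1), i ≠ j → Disjoint (I i) (I j) := by
      intro i j hij
      rw [Finset.disjoint_left]
      intro v hvi hvj
      obtain ⟨w, hw, hwv⟩ := Finset.exists_mem_ne
        (by rw [(hI j).1]; omega) v
      exact (hI j).2 v hvj w hw (key i j hij v hvi w hw hwv.symm)
    obtain ⟨u, hu⟩ : (I 0).Nonempty := by
      rw [← Finset.card_pos, (hI 0).1]; omega
    set T : Finset V := (Finset.univ.erase (0 : Fin ((k+n)/n+1))).biUnion I with hT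
    have hsub : T ⊆ G.neighborFinset u := by
      intro v hv
      rw [hT, Finset.mem_biUnion] at hv
      obtain ⟨j, hj, hvj⟩ := hv
      have hj0 : (0 : Fin ((k+n)/n+1)) ≠ j := (Finset.ne_of_mem_erase hj).symm
      have huv : u ≠ v := fun h => (Finset.disjoint_left.mp (hdisj 0 j hj0) hu) (h ▸ hvj)
      rw [SimpleGraph.mem_neighborFinset]
      exact key 0 j hj0 u hu v hvj huv
    have hcard : T.card = n * ((k+n)/n) := by
      rw [hT, Finset.card_biUnion (fun i _ j _ hij => hdisj i j hij)]
      rw [Finset.sum_congr rfl (fun j _ => (hI j).1), Finset.sum_const,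
        Finset.card_erase_of_mem (Finset.mem_univ _)]
      simp [mul_comm]
    have h1 : T.card ≤ G.degree u := Finset.card_le_card hsub
    have h2 : k + 1 ≤ n * ((k+n)/n) := by
      rw [Nat.add_div_right k hn0]
      have h3 := Nat.div_add_mod k n
      have h4 : k % n < n := Nat.mod_lt _ hn0
      have h5 : n * (k/n + 1) = n * (k/n) + n := by ring
      omega
    have := hdeg u
    omega
  · refine ⟨Fin ((k+n)/n) × Fin n, inferInstance, rowGraph ((k+n)/n) n,
      rowGraph_dec _ _, ?_, fun i => {i} ×ˢ Finset.univ, ?_, ?_⟩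
    · intro p
      rw [SimpleGraph.degree, SimpleGraph.neighborFinset_eq_filter]
      have h2 : (Finset.univ.filter (fun q : Fin ((k+n)/n) × Fin n => ¬ p.1 ≠ q.1))
          = {p.1} ×ˢ Finset.univ := by
        ext q
        simp only [Finset.mem_filter, Finset.mem_univ, true_and, Finset.mem_product,
          Finset.mem_singleton, not_not, eq_comm, and_true]
      have h3 := Finset.card_filter_add_card_filter_not
        (s := (Finset.univ : Finset (Fin ((k+n)/n) × Fin n)))
        (p := fun q => p.1 ≠ q.1)
      rw [h2] at h3
      have h4 : ({p.1} ×ˢ (Finset.univ : Finset (Fin n))).card = n := by simp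
      have h5 : (Finset.univ : Finset (Fin ((k+n)/n) × Fin n)).card = ((k+n)/n) * n := by
        simp
      have h6 : (k+n)/n = k/n + 1 := Nat.add_div_right k hn0
      have h10 : ((k+n)/n)*n = (k/n + 1)*n := by rw [h6]
      have h7 : (k/n + 1) * n = k/n * n + n := by ring
      have h8 : k/n * n ≤ k := Nat.div_mul_le_self k n
      have h9 : (Finset.univ.filter (fun q => (rowGraph ((k+n)/n) n).Adj p q))
          = Finset.univ.filter (fun q : Fin ((k+n)/n) × Fin n => p.1 ≠ q.1) := rfl
      rw [h9]
      omega
    · intro i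
      constructor
      · simp
      · intro u hu v hv
        simp only [Finset.mem_product, Finset.mem_singleton] at hu hv
        exact fun h => h (hu.1.trans hv.1.symm)
    · rintro ⟨j, v, hj, hv, hmem, hadj⟩
      have h0 := hmem 0
      have h1 := hmem 1
      simp only [Finset.mem_product, Finset.mem_singleton] at h0 h1
      apply hadj 0 1 (by decide)
      show (v 0).1 ≠ (v 1).1
      rw [h0.1, h1.1]
      intro h
      exact absurd (hj h) (by decide)
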